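/- The carry-rule system C_k C_k → C_k Z_k, C_k Z_k → C_{k+1} Z_k, C_{k+1} Z_k → C_{k+1}, C_k → c_k correctly computes binary representations: for every positive integer m, the string C_0^m rewrites (under the closure of these context-sensitive rules) to the string consisting of one c_i for each bit position i where the binary representation of m has a 1, concatenated in order. -/

import Mathlib

/-- A general (context-sensitive style) rewriting rule: a left-hand side and a
right-hand side, both strings of symbols. -/
structure GenRule (T N : Type*) where
  lhs : List (Symbol T N)
  rhs : List (Symbol T N)

/-- One rewriting step: some rule of `R` is applied to a contiguous substring. -/
def GStep {T N : Type*} (R : Set (GenRule T N)) (u v : List (Symbol T N)) : Prop :=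
  ∃ r ∈ R, ∃ x y : List (Symbol T N), u = x ++ r.lhs ++ y ∧ v = x ++ r.rhs ++ y

/-- Rewriting: the reflexive-transitive closure of single steps. -/
def GDerives {T N : Type*} (R : Set (GenRule T N)) :
    List (Symbol T N) → List (Symbol T N) → Prop :=
  Relation.ReflTransGen (GStep R)

/-- Nonterminals: the digit counters `C k` and the carry markers `Z k`. -/
inductive CNT
  | C (k : ℕ)
  | Z (k : ℕ)

/-- Shorthand for nonterminal symbols (the terminal `k : ℕ` codes `c_k`). -/
def nt (x : CNT) : Symbol ℕ CNT := Symbol.nonterminal x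

/-- The carry-rule system `C_k C_k → C_k Z_k`, `C_k Z_k → C_{k+1} Z_k`,
`C_{k+1} Z_k → C_{k+1}`, `C_k → c_k`, for `k = 0, …, K`. -/
def carryRules (K : ℕ) : Set (GenRule ℕ CNT) :=
  { r |
    (∃ k ≤ K, r = ⟨[nt (.C k), nt (.C k)], [nt (.C k), nt (.Z k)]⟩) ∨
    (∃ k ≤ K, r = ⟨[nt (.C k), nt (.Z k)], [nt (.C (k + 1)), nt (.Z k)]⟩) ∨
    (∃ k ≤ K, r = ⟨[nt (.C (k + 1)), nt (.Z k)], [nt (.C (k + 1))]⟩) ∨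
    (∃ k ≤ K, r = ⟨[nt (.C k)], [Symbol.terminal k]⟩) }

/-- The binary representation of `m` as a string of terminals: one `c_i` for
each bit position `i` where `m` has a `1`, concatenated in (descending) order. -/
def binString (m : ℕ) : List ℕ :=
  ((List.range (Nat.size m)).filter fun i => m.testBit i).reverse

lemma GStep.append {T N : Type*} {R : Set (GenRule T N)} {u v : List (Symbol T N)}
    (h : GStep R u v) (x y : List (Symbol T N)) :
    GStep R (x ++ u ++ y) (x ++ v ++ y) := by
  obtain ⟨r, hr, a, b, rfl, rfl⟩ := h
  exact ⟨r, hr, x ++ a, b ++ y, by simp, by simp⟩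

lemma GDerives.append {T N : Type*} {R : Set (GenRule T N)} {u v : List (Symbol T N)}
    (h : GDerives R u v) (x y : List (Symbol T N)) :
    GDerives R (x ++ u ++ y) (x ++ v ++ y) := by
  induction h with
  | refl => exact Relation.ReflTransGen.refl
  | tail _ hst ih => exact ih.tail (hst.append x y)

lemma GDerives.append_both {T N : Type*} {R : Set (GenRule T N)}
    {u v u' v' : List (Symbol T N)} (h : GDerives R u u') (h' : GDerives R v v') :
    GDerives R (u ++ v) (u' ++ v') := by
  have h1 := h.append [] v
  have h2 := h'.append u' []
  simp at h1 h2
  exact h1.trans h2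

lemma step_of_rule {K : ℕ} {r : GenRule ℕ CNT} (hr : r ∈ carryRules K) :
    GStep (carryRules K) r.lhs r.rhs :=
  ⟨r, hr, [], [], by simp, by simp⟩

lemma merge {K k : ℕ} (hk : k ≤ K) :
    GDerives (carryRules K) [nt (.C k), nt (.C k)] [nt (.C (k + 1))] := by
  have s1 : GStep (carryRules K) [nt (.C k), nt (.C k)] [nt (.C k), nt (.Z k)] :=
    step_of_rule (Or.inl ⟨k, hk, rfl⟩)
  have s2 : GStep (carryRules K) [nt (.C k), nt (.Z k)] [nt (.C (k + 1)), nt (.Z k)] :=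
    step_of_rule (Or.inr (Or.inl ⟨k, hk, rfl⟩))
  have s3 : GStep (carryRules K) [nt (.C (k + 1)), nt (.Z k)] [nt (.C (k + 1))] :=
    step_of_rule (Or.inr (Or.inr (Or.inl ⟨k, hk, rfl⟩)))
  exact (Relation.ReflTransGen.single s1).tail s2 |>.tail s3

lemma merge_pairs {K k : ℕ} (hk : k ≤ K) (q b : ℕ) :
    GDerives (carryRules K) (List.replicate (2 * q + b) (nt (.C k)))
      (List.replicate q (nt (.C (k + 1))) ++ List.replicate b (nt (.C k))) := by
  induction q with
  | zero => simpa [GDerives] using (Relation.ReflTransGen.refl : GDerives (carryRules K) (List.replicate b (nt (.C k))) _)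
  | succ n ih =>
    have e : List.replicate (2 * (n + 1) + b) (nt (CNT.C k)) =
        [nt (.C k), nt (.C k)] ++ List.replicate (2 * n + b) (nt (.C k)) := by
      rw [show 2 * (n + 1) + b = 2 + (2 * n + b) by ring, List.replicate_add]; rfl
    rw [e]
    have h1 : GDerives (carryRules K)
        ([nt (.C k), nt (.C k)] ++ List.replicate (2 * n + b) (nt (.C k)))
        ([nt (.C (k + 1))] ++ List.replicate (2 * n + b) (nt (.C k))) :=
      GDerives.append_both (merge hk) Relation.ReflTransGen.refl
    have h2 : GDerives (carryRules K)
        ([nt (.C (k + 1))] ++ List.replicate (2 * n + b) (nt (.C k)))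
        ([nt (.C (k + 1))] ++ (List.replicate n (nt (.C (k + 1))) ++ List.replicate b (nt (.C k)))) :=
      GDerives.append_both Relation.ReflTransGen.refl ih
    have h3 := h1.trans h2
    simpa [GDerives, List.replicate_succ] using h3

def ntRep (m k : ℕ) : List (Symbol ℕ CNT) :=
  ((List.range (Nat.size m)).filter fun i => m.testBit i).reverse.map fun i => nt (.C (k + i))

lemma size_div2 {m : ℕ} (h : 0 < m) : Nat.size m = Nat.size (m / 2) + 1 := by
  conv_lhs => rw [← Nat.bit_testBit_zero_shiftRight_one m]
  rw [Nat.size_bit]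
  · simp [Nat.shiftRight_eq_div_pow]
  · rw [Nat.bit_testBit_zero_shiftRight_one]; omega

lemma ntRep_succ {m : ℕ} (hm : 0 < m) (k : ℕ) :
    ntRep m k = ntRep (m / 2) (k + 1) ++ List.replicate (m % 2) (nt (.C k)) := by
  unfold ntRep
  rw [size_div2 hm, List.range_succ_eq_map, List.filter_cons]
  rw [List.filter_map]
  simp only [Nat.testBit_zero]
  rcases Nat.mod_two_eq_zero_or_one m with h | h <;>
  · simp [h, Function.comp_def, Nat.testBit_succ, List.map_map, Nat.succ_eq_add_one]
    intro a _ _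
    rw [show k + (a + 1) = k + 1 + a by ring]

lemma main_derive (K : ℕ) : ∀ m, 0 < m → ∀ k, Nat.size m + k ≤ K + 1 →
    GDerives (carryRules K) (List.replicate m (nt (.C k))) (ntRep m k) := by
  intro m
  induction m using Nat.strong_induction_on with
  | _ m ih =>
    intro hm k hK
    rcases eq_or_lt_of_le (Nat.one_le_iff_ne_zero.mpr hm.ne') with h1 | h2
    · -- m = 1
      have : m = 1 := h1.symm
      subst this
      have : ntRep 1 k = [nt (.C k)] := by
        simp [ntRep, Nat.size_one, List.range_succ]
      rw [this]
      exact Relation.ReflTransGen.refl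
    · -- m ≥ 2
      have hq : 0 < m / 2 := Nat.div_pos h2 (by norm_num)
      have hk : k ≤ K := by
        have := Nat.size_pos.mpr hm
        omega
      have hdecomp : m = 2 * (m / 2) + m % 2 := (Nat.div_add_mod' m 2).symm ▸ by omega
      have h1 : GDerives (carryRules K) (List.replicate m (nt (.C k)))
          (List.replicate (m / 2) (nt (.C (k + 1))) ++ List.replicate (m % 2) (nt (.C k))) := by
        conv_lhs => rw [hdecomp]
        exact merge_pairs hk _ _
      have hsz : Nat.size (m / 2) + (k + 1) ≤ K + 1 := by
        rw [size_div2 hm] at hK; omega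
      have h2' : GDerives (carryRules K)
          (List.replicate (m / 2) (nt (.C (k + 1))) ++ List.replicate (m % 2) (nt (.C k)))
          (ntRep (m / 2) (k + 1) ++ List.replicate (m % 2) (nt (.C k))) :=
        GDerives.append_both (ih (m / 2) (by omega) hq (k + 1) hsz) Relation.ReflTransGen.refl
      rw [ntRep_succ hm]
      exact h1.trans h2'

lemma terminalize {K : ℕ} (l : List ℕ) (hl : ∀ i ∈ l, i ≤ K) :
    GDerives (carryRules K) (l.map fun i => nt (.C i)) (l.map Symbol.terminal) := by
  induction l with
  | nil => exact Relation.ReflTransGen.refl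
  | cons a t iht =>
    have ha : a ≤ K := hl a (by simp)
    have s : GDerives (carryRules K) [nt (.C a)] [Symbol.terminal a] :=
      Relation.ReflTransGen.single (step_of_rule (Or.inr (Or.inr (Or.inr ⟨a, ha, rfl⟩))))
    have := GDerives.append_both s (iht fun i hi => hl i (by simp [hi]))
    simpa using this

/-- The carry-rule system correctly computes binary representations: for every
positive integer `m` (whose binary representation fits within the available
indices `0, …, K`), the string `C_0 ^ m` rewrites to the string consisting of
one `c_i` for each bit position `i` where the binary representation of `m` has
a `1`, concatenated in order. -/
theorem carry_rules_compute_binary (K m : ℕ) (hm : 0 < m)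
    (hK : Nat.size m ≤ K + 1) :
    GDerives (carryRules K) (List.replicate m (nt (.C 0)))
      ((binString m).map Symbol.terminal) := by
  have h1 := main_derive K m hm 0 (by omega)
  have h2 : ntRep m 0 = (binString m).map fun i => nt (.C i) := by
    simp [ntRep, binString]
  rw [h2] at h1
  refine h1.trans (terminalize _ fun i hi => ?_)
  simp [binString, List.mem_filter, List.mem_range] at hi
  omega
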